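/- (Lemma 1) The matrix Q is diagonalizable over the reals with all eigenvalues in [0, 1]: there exist an invertible real 𝒴 × 𝒴 matrix U and a function d : 𝒴 → ℝ with 0 ≤ d(k) ≤ 1 for every k ∈ 𝒴 such that Q = U · diag(d) · U⁻¹, where diag(d) denotes the diagonal matrix with diagonal entries d(k). -/

import Mathlib

open MeasureTheory

/-- (Lemma 1) The matrix `Q` is diagonalizable over the reals with all
eigenvalues in `[0, 1]`. -/
theorem stmt_2 {Y : Type*} [Fintype Y] [Nonempty Y] [DecidableEq Y]
    {A : Type*} [MeasurableSpace A] (μ : Measure A) [IsProbabilityMeasure μ]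
    (f : Y → A → ℝ)
    (hmeas : ∀ y, Measurable (f y))
    (hnonneg : ∀ y α, 0 ≤ f y α)
    (hsum : ∀ α, ∑ y, f y α = 1)
    (p : Y → ℝ) (hp : ∀ y, p y = ∫ α, f y α ∂μ)
    (hppos : ∀ y, 0 < p y)
    (Q : Matrix Y Y ℝ)
    (hQ : ∀ yt y, Q yt y = (∫ α, f yt α * f y α ∂μ) / p y) :
    ∃ (U : Matrix Y Y ℝ) (d : Y → ℝ),
      IsUnit U.det ∧ (∀ k, 0 ≤ d k ∧ d k ≤ 1) ∧
      Q = U * Matrix.diagonal d * U⁻¹ := by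
  classical
  -- basic facts
  have hfle1 : ∀ y α, f y α ≤ 1 := by
    intro y α
    calc f y α ≤ ∑ z, f z α :=
          Finset.single_le_sum (fun z _ => hnonneg z α) (Finset.mem_univ y)
      _ = 1 := hsum α
  have hintf : ∀ y, Integrable (f y) μ := by
    intro y
    refine (integrable_const (1 : ℝ)).mono' (hmeas y).aestronglyMeasurable ?_
    exact Filter.Eventually.of_forall fun α => by
      rw [Real.norm_eq_abs, abs_of_nonneg (hnonneg y α)]; exact hfle1 y α
  have hintff : ∀ y z, Integrable (fun α => f y α * f z α) μ := by
    intro y z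
    refine (integrable_const (1 : ℝ)).mono'
      ((hmeas y).mul (hmeas z)).aestronglyMeasurable ?_
    refine Filter.Eventually.of_forall fun α => ?_
    rw [Real.norm_eq_abs, abs_of_nonneg (mul_nonneg (hnonneg y α) (hnonneg z α))]
    exact mul_le_one₀ (hfle1 y α) (hnonneg z α) (hfle1 z α)
  set s : Y → ℝ := fun y => Real.sqrt (p y) with hs_def
  have hspos : ∀ y, 0 < s y := fun y => Real.sqrt_pos.2 (hppos y)
  have hsne : ∀ y, s y ≠ 0 := fun y => (hspos y).ne'
  have hss : ∀ y, s y * s y = p y := fun y => Real.mul_self_sqrt (hppos y).le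
  -- the symmetric conjugated matrix
  set M : Matrix Y Y ℝ :=
    Matrix.of fun yt y => (∫ α, f yt α * f y α ∂μ) / (s yt * s y) with hM_def
  have hMapp : ∀ yt y, M yt y = (∫ α, f yt α * f y α ∂μ) / (s yt * s y) := fun _ _ => rfl
  have hM : M.IsHermitian := by
    ext i j
    simp only [Matrix.conjTranspose_apply, hMapp, star_trivial]
    rw [mul_comm (s j) (s i)]
    congr 1
    exact integral_congr_ae (Filter.Eventually.of_forall fun α => mul_comm _ _)
  -- quadratic form of M as an integral of a square
  have hquad : ∀ x : Y → ℝ,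
      dotProduct x (M.mulVec x) =
        ∫ α, (∑ y, (x y / s y) * f y α) ^ 2 ∂μ := by
    intro x
    have hexp : ∀ α, (∑ y, (x y / s y) * f y α) ^ 2 =
        ∑ yt, ∑ y, (x yt / s yt) * (x y / s y) * (f yt α * f y α) := by
      intro α
      rw [sq, Finset.sum_mul_sum]
      refine Finset.sum_congr rfl fun yt _ => Finset.sum_congr rfl fun y _ => by ring
    simp_rw [hexp]
    rw [integral_finset_sum _ (fun yt _ =>
      integrable_finset_sum _ (fun y _ => (hintff yt y).const_mul _))]
    have : ∀ yt, (∫ α, ∑ y, (x yt / s yt) * (x y / s y) * (f yt α * f y α) ∂μ)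
        = ∑ y, (x yt / s yt) * (x y / s y) * ∫ α, f yt α * f y α ∂μ := by
      intro yt
      rw [integral_finset_sum _ (fun y _ => (hintff yt y).const_mul _)]
      exact Finset.sum_congr rfl fun y _ => integral_const_mul _ _
    simp_rw [this]
    simp only [dotProduct, Matrix.mulVec, dotProduct, hMapp]
    refine Finset.sum_congr rfl fun yt _ => ?_
    rw [Finset.mul_sum]
    refine Finset.sum_congr rfl fun y _ => ?_
    field_simp
  -- M is positive semidefinite
  have hMpsd : M.PosSemidef := by
    refine Matrix.PosSemidef.of_dotProduct_mulVec_nonneg hM fun x => ?_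
    rw [star_trivial, hquad x]
    exact integral_nonneg fun α => sq_nonneg _
  -- 1 - M is positive semidefinite
  have h1Mpsd : (1 - M).PosSemidef := by
    refine Matrix.PosSemidef.of_dotProduct_mulVec_nonneg ?_ ?_
    · exact (Matrix.isHermitian_one).sub hM
    · intro x
      rw [star_trivial, Matrix.sub_mulVec, dotProduct_sub, Matrix.one_mulVec, hquad x]
      have hxx : dotProduct x x = ∫ α, ∑ y, (x y / s y) ^ 2 * f y α ∂μ := by
        rw [integral_finset_sum _ (fun y _ => (hintf y).const_mul _)]
        simp_rw [integral_const_mul]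
        simp only [dotProduct]
        refine Finset.sum_congr rfl fun y _ => ?_
        rw [← hp y]
        rw [← hss y]
        field_simp
        rw [mul_div_assoc, div_self (hsne y), mul_one]
      rw [hxx, sub_nonneg]
      refine integral_mono ?_ (integrable_finset_sum _ (fun y _ => (hintf y).const_mul _)) ?_
      · -- integrability of the square of the sum
        have hg_meas : Measurable (fun α => ∑ y, (x y / s y) * f y α) :=
          Finset.measurable_sum _ fun y _ => (hmeas y).const_mul _
        refine (integrable_const ((∑ y, |x y / s y|) ^ 2)).mono'
          ((hg_meas.pow_const 2).aestronglyMeasurable) ?_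
        refine Filter.Eventually.of_forall fun α => ?_
        rw [Real.norm_eq_abs, abs_of_nonneg (sq_nonneg _)]
        have habs : |∑ y, (x y / s y) * f y α| ≤ ∑ y, |x y / s y| := by
          refine (Finset.abs_sum_le_sum_abs _ _).trans ?_
          refine Finset.sum_le_sum fun y _ => ?_
          rw [abs_mul]
          exact mul_le_of_le_one_right (abs_nonneg _)
            (by rw [abs_of_nonneg (hnonneg y α)]; exact hfle1 y α)
        calc (∑ y, (x y / s y) * f y α) ^ 2 = |∑ y, (x y / s y) * f y α| ^ 2 := (sq_abs _).symm
          _ ≤ (∑ y, |x y / s y|) ^ 2 := by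
              exact pow_le_pow_left₀ (abs_nonneg _) habs 2
      · -- pointwise Cauchy-Schwarz
        intro α
        have := Finset.sum_mul_sq_le_sq_mul_sq Finset.univ
          (fun y => (x y / s y) * Real.sqrt (f y α)) (fun y => Real.sqrt (f y α))
        have h1 : ∀ y, (x y / s y) * Real.sqrt (f y α) * Real.sqrt (f y α)
            = (x y / s y) * f y α := by
          intro y
          rw [mul_assoc, Real.mul_self_sqrt (hnonneg y α)]
        have h2 : ∀ y, ((x y / s y) * Real.sqrt (f y α)) ^ 2 = (x y / s y) ^ 2 * f y α := by
          intro y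
          rw [mul_pow, Real.sq_sqrt (hnonneg y α)]
        have h3 : ∀ y, (Real.sqrt (f y α)) ^ 2 = f y α := fun y => Real.sq_sqrt (hnonneg y α)
        simp_rw [h1, h2, h3] at this
        rw [hsum α, mul_one] at this
        exact this
  -- assemble
  set E : Matrix Y Y ℝ := Matrix.diagonal s with hE_def
  set Einv : Matrix Y Y ℝ := Matrix.diagonal (fun y => (s y)⁻¹) with hEinv_def
  have hEinvE : Einv * E = 1 := by
    rw [hEinv_def, hE_def, Matrix.diagonal_mul_diagonal]
    have h : (fun i => (s i)⁻¹ * s i) = fun _ => (1 : ℝ) :=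
      funext fun i => inv_mul_cancel₀ (hsne i)
    rw [h, Matrix.diagonal_one]
  have hQEM : Q = E * M * Einv := by
    ext yt y
    have h1 : (E * M * Einv) yt y = s yt * M yt y * (s y)⁻¹ := by
      rw [Matrix.mul_diagonal, Matrix.diagonal_mul]
    rw [h1, hQ, hMapp, ← hss y]
    field_simp
    rw [mul_div_mul_right _ _ (hsne yt)]
  set U0 : Matrix Y Y ℝ := (hM.eigenvectorUnitary : Matrix Y Y ℝ) with hU0_def
  set d := hM.eigenvalues with hd_def
  have hspec : M = U0 * Matrix.diagonal d * star U0 := by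
    have h := hM.spectral_theorem
    simpa [RCLike.ofReal_real_eq_id] using h
  have hstarU0 : star U0 * U0 = 1 := by
    exact Matrix.UnitaryGroup.star_mul_self hM.eigenvectorUnitary
  have hVU : (star U0 * Einv) * (E * U0) = 1 := by
    calc (star U0 * Einv) * (E * U0) = star U0 * (Einv * E) * U0 := by
          rw [mul_assoc, mul_assoc, mul_assoc]
      _ = star U0 * U0 := by rw [hEinvE, mul_one]
      _ = 1 := hstarU0
  have hdet : IsUnit (E * U0).det := Matrix.isUnit_det_of_left_inverse hVU
  have hinv : (E * U0)⁻¹ = star U0 * Einv := Matrix.inv_eq_left_inv hVU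
  refine ⟨E * U0, d, hdet, ?_, ?_⟩
  · intro k
    constructor
    · exact hMpsd.eigenvalues_nonneg k
    · -- d k ≤ 1 via PSD of 1 - M evaluated at the k-th eigenvector
      have hv := hM.mulVec_eigenvectorBasis k
      set v : Y → ℝ := ⇑(hM.eigenvectorBasis k) with hv_def
      have hstarv : star v = v := by
        funext j; simp
      have hvv : dotProduct v v = 1 := by
        have hnorm : ‖hM.eigenvectorBasis k‖ = 1 := hM.eigenvectorBasis.orthonormal.1 k
        have hinner : (inner ℝ (hM.eigenvectorBasis k) (hM.eigenvectorBasis k) : ℝ)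
            = dotProduct v v := by
          rw [PiLp.inner_apply]
          simp [dotProduct]
          exact Finset.sum_congr rfl fun i _ => sq _
        rw [← hinner, real_inner_self_eq_norm_sq, hnorm, one_pow]
      have h0 := h1Mpsd.dotProduct_mulVec_nonneg v
      rw [hstarv, Matrix.sub_mulVec, Matrix.one_mulVec, dotProduct_sub, hv,
        dotProduct_smul, hvv] at h0
      simp only [smul_eq_mul, mul_one] at h0
      linarith
  · rw [hQEM, hspec, hinv]
    simp only [Matrix.mul_assoc]
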